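/- For every natural number n, parameters u_ℓ = (θ_ℓ, φ_ℓ, λ_ℓ) ∈ ℝ³ for ℓ = 0,…,n−1, and all n-bit strings J' and J, the coin-marginal transition probability of two walk evolutions satisfies ∑_{k ∈ ZMod 2} ‖(U²)_{(k,J'),(0,J)}‖² = ∑_{k ∈ ZMod 2} | ∑_{I : I_{n−1} = k} f(I, J' ⊕ J ⊕ I) |², where the inner sum is over all n-bit strings I whose (n−1)-th bit equals k, and f(I,K) := (∏_{ℓ=0}^{n−1} [U3(u_ℓ)]_{I_ℓ, I_{ℓ−1}}) · (∏_{ℓ=0}^{n−1} [U3(u_ℓ)]_{K_ℓ, K_{ℓ−1}}) with the conventions I_{−1} = K_{n−1} and K_{−1} = 0. -/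

import Mathlib

/-- The single-qubit rotation gate `U3(θ,φ,λ)`, indexed by `ZMod 2`. -/
noncomputable def U3 (θ φ lam : ℝ) : Matrix (ZMod 2) (ZMod 2) ℂ :=
  Matrix.of fun μ ν =>
    if μ = 0 then
      (if ν = 0 then (Real.cos (θ / 2) : ℂ)
       else -Complex.exp (Complex.I * lam) * (Real.sin (θ / 2) : ℂ))
    else
      (if ν = 0 then Complex.exp (Complex.I * φ) * (Real.sin (θ / 2) : ℂ)
       else Complex.exp (Complex.I * (lam + φ)) * (Real.cos (θ / 2) : ℂ))

/-- Coin rotation: `U3` acting on the coin qubit, identity on the graph qubits. -/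
noncomputable def coinR (n : ℕ) (u : ℝ × ℝ × ℝ) :
    Matrix (ZMod 2 × (Fin n → ZMod 2)) (ZMod 2 × (Fin n → ZMod 2)) ℂ :=
  Matrix.of fun p q => if p.2 = q.2 then U3 u.1 u.2.1 u.2.2 p.1 q.1 else 0

/-- Controlled flip of the `k`-th graph qubit, controlled by the coin qubit. -/
def flipC (n : ℕ) (k : Fin n) :
    Matrix (ZMod 2 × (Fin n → ZMod 2)) (ZMod 2 × (Fin n → ZMod 2)) ℂ :=
  Matrix.of fun p q =>
    if p.1 = q.1 ∧ p.2 = q.2 + q.1 • (Pi.single k 1 : Fin n → ZMod 2) then 1 else 0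

/-- One quantum-walk evolution `U = W_{n-1} ⋯ W_1 W_0`, where `W_k = C_k · R_k`. -/
noncomputable def walkU (n : ℕ) (u : Fin n → ℝ × ℝ × ℝ) :
    Matrix (ZMod 2 × (Fin n → ZMod 2)) (ZMod 2 × (Fin n → ZMod 2)) ℂ :=
  ((List.finRange n).reverse.map (fun k => flipC n k * coinR n (u k))).prod

/-- The bit `K_{ℓ-1}` of an `n`-bit string, with a prescribed value `d` for `K_{-1}`. -/
def prevBitD (n : ℕ) (K : Fin n → ZMod 2) (d : ZMod 2) (ℓ : Fin n) : ZMod 2 :=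
  if 0 < (ℓ : ℕ) then K ⟨(ℓ : ℕ) - 1, lt_of_le_of_lt (Nat.sub_le _ _) ℓ.isLt⟩ else d

/-- The bit `I_{n-1}` of an `n`-bit string, with the convention `I_{-1} = 0` (for `n = 0`). -/
def lastBit (n : ℕ) (I : Fin n → ZMod 2) : ZMod 2 :=
  if h : 0 < n then I ⟨n - 1, Nat.sub_lt h Nat.one_pos⟩ else 0

/-- The two-evolution amplitude
`f(I,K) = (∏_ℓ [U3(u_ℓ)]_{I_ℓ,I_{ℓ-1}}) (∏_ℓ [U3(u_ℓ)]_{K_ℓ,K_{ℓ-1}})`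
with the conventions `I_{-1} = K_{n-1}` and `K_{-1} = 0`. -/
noncomputable def fTwo (n : ℕ) (u : Fin n → ℝ × ℝ × ℝ) (I K : Fin n → ZMod 2) : ℂ :=
  (∏ ℓ : Fin n,
      U3 (u ℓ).1 (u ℓ).2.1 (u ℓ).2.2 (I ℓ) (prevBitD n I (lastBit n K) ℓ)) *
  (∏ ℓ : Fin n,
      U3 (u ℓ).1 (u ℓ).2.1 (u ℓ).2.2 (K ℓ) (prevBitD n K 0 ℓ))

namespace Stmt12Aux

lemma pi_add_self {n : ℕ} (v : Fin n → ZMod 2) : v + v = 0 := by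
  funext i; exact CharTwo.add_self_eq_zero (v i)

lemma pi_add_cancel_iff {n : ℕ} (a b v : Fin n → ZMod 2) : a = b + v ↔ b = a + v := by
  constructor <;> (rintro rfl; rw [add_assoc, pi_add_self, add_zero])

/-- Entry formula for a single step `W_k = C_k R_k`. -/
lemma W_apply (n : ℕ) (k : Fin n) (v : ℝ × ℝ × ℝ) (c' c : ZMod 2)
    (J' J : Fin n → ZMod 2) :
    (flipC n k * coinR n v) (c', J') (c, J) =
      if J' = J + c' • (Pi.single k 1 : Fin n → ZMod 2)
      then U3 v.1 v.2.1 v.2.2 c' c else 0 := by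
  rw [Matrix.mul_apply]
  rw [Finset.sum_eq_single (c', J' + c' • (Pi.single k 1 : Fin n → ZMod 2))]
  · have h1 : J' = (J' + c' • (Pi.single k 1 : Fin n → ZMod 2))
        + c' • (Pi.single k 1 : Fin n → ZMod 2) := by
      rw [add_assoc, pi_add_self, add_zero]
    simp only [flipC, coinR, Matrix.of_apply]
    rw [if_pos ⟨trivial, h1⟩, one_mul]
    by_cases h : J' + c' • (Pi.single k 1 : Fin n → ZMod 2) = J
    · rw [if_pos h, if_pos ((pi_add_cancel_iff _ _ _).mp h.symm)]
    · rw [if_neg h, if_neg (fun hh => h (((pi_add_cancel_iff _ _ _).mp hh).symm))]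
  · rintro ⟨b, M⟩ - hne
    simp only [flipC, Matrix.of_apply]
    rw [if_neg, zero_mul]
    rintro ⟨rfl, h2⟩
    exact hne (by rw [Prod.mk.injEq]; exact ⟨rfl, (pi_add_cancel_iff _ _ _).mp h2⟩)
  · intro h; exact absurd (Finset.mem_univ _) h

/-- Partial products `W_{m-1} ⋯ W_0`. -/
noncomputable def partP (n : ℕ) (u : Fin n → ℝ × ℝ × ℝ) : ℕ →
    Matrix (ZMod 2 × (Fin n → ZMod 2)) (ZMod 2 × (Fin n → ZMod 2)) ℂ
  | 0 => 1
  | (m + 1) =>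
      (if h : m < n then flipC n ⟨m, h⟩ * coinR n (u ⟨m, h⟩) else 1) * partP n u m

lemma walkU_eq_partP (n : ℕ) (u : Fin n → ℝ × ℝ × ℝ) : walkU n u = partP n u n := by
  have key : ∀ m, m ≤ n →
      (((List.finRange n).take m).reverse.map
        (fun k => flipC n k * coinR n (u k))).prod = partP n u m := by
    intro m
    induction m with
    | zero => intro _; simp [partP]
    | succ m ih =>
      intro hm
      have hmn : m < n := hm
      have htake : (List.finRange n).take (m + 1)
          = (List.finRange n).take m ++ [(⟨m, hmn⟩ : Fin n)] := by
        rw [List.take_succ]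
        congr 1
        rw [List.getElem?_eq_getElem (by simpa using hmn)]
        simp [List.getElem_finRange]
      rw [htake, List.reverse_append, List.map_append, List.prod_append]
      simp only [List.reverse_cons, List.reverse_nil, List.nil_append, List.map_cons,
        List.map_nil, List.prod_cons, List.prod_nil, mul_one]
      rw [ih (le_of_lt hmn)]
      show _ = (if h : m < n then flipC n ⟨m, h⟩ * coinR n (u ⟨m, h⟩) else 1) * partP n u m
      rw [dif_pos hmn]
  have := key n le_rfl
  rw [walkU, ← this, List.take_of_length_le (by simp)]

lemma partP_apply (n : ℕ) (u : Fin n → ℝ × ℝ × ℝ) :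
    ∀ (m : ℕ) (hm : m ≤ n), ∀ (c' c : ZMod 2) (J' J : Fin n → ZMod 2),
    partP n u m (c', J') (c, J) =
      if (∀ ℓ : Fin n, m ≤ (ℓ : ℕ) → J' ℓ = J ℓ) ∧
          c' = (if h : 0 < m then (J' + J) ⟨m - 1, by omega⟩ else c)
      then ∏ ℓ ∈ Finset.univ.filter (fun ℓ : Fin n => (ℓ : ℕ) < m),
          U3 (u ℓ).1 (u ℓ).2.1 (u ℓ).2.2 ((J' + J) ℓ) (prevBitD n (J' + J) c ℓ)
      else 0 := by
  intro m
  induction m with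
  | zero =>
    intro _ c' c J' J
    show (1 : Matrix (ZMod 2 × (Fin n → ZMod 2)) (ZMod 2 × (Fin n → ZMod 2)) ℂ) _ _ = _
    rw [Matrix.one_apply]
    have hfil : Finset.univ.filter (fun ℓ : Fin n => (ℓ : ℕ) < 0) = ∅ := by
      ext ℓ; simp
    rw [hfil, Finset.prod_empty]
    rw [dif_neg (lt_irrefl 0)]
    by_cases h : ((c', J') : ZMod 2 × (Fin n → ZMod 2)) = (c, J)
    · rw [if_pos h, if_pos]
      obtain ⟨h1, h2⟩ := Prod.mk.injEq .. ▸ h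
      exact ⟨fun ℓ _ => by rw [h2], h1⟩
    · rw [if_neg h, if_neg]
      rintro ⟨h1, h2⟩
      exact h (by rw [Prod.mk.injEq]; exact ⟨h2, funext fun ℓ => h1 ℓ (Nat.zero_le _)⟩)
  | succ m ih =>
    intro hm c' c J' J
    have hmn : m < n := hm
    set km : Fin n := ⟨m, hmn⟩ with hkm
    set s : Fin n → ZMod 2 := Pi.single km 1 with hs
    set M₀ : Fin n → ZMod 2 := J' + c' • s with hM0
    have hM0k : M₀ km = J' km + c' := by
      rw [hM0, Pi.add_apply, Pi.smul_apply, hs, Pi.single_eq_same, smul_eq_mul, mul_one]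
    have hM0ne : ∀ ℓ : Fin n, ℓ ≠ km → M₀ ℓ = J' ℓ := by
      intro ℓ h
      rw [hM0, Pi.add_apply, Pi.smul_apply, hs, Pi.single_eq_of_ne h, smul_zero, add_zero]
    show ((if h : m < n then flipC n ⟨m, h⟩ * coinR n (u ⟨m, h⟩) else 1)
        * partP n u m) (c', J') (c, J) = _
    rw [dif_pos hmn, Matrix.mul_apply, Fintype.sum_prod_type]
    simp only [W_apply]
    have hcond : ∀ M : Fin n → ZMod 2, (J' = M + c' • s) ↔ (M = M₀) :=
      fun M => pi_add_cancel_iff J' M _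
    rw [Finset.sum_congr rfl (fun b _ => Finset.sum_congr rfl (fun M _ => by
      rw [if_congr (hcond M) rfl rfl, ite_mul, zero_mul]))]
    simp only [Finset.sum_ite_eq', Finset.mem_univ, if_true]
    simp only [ih (le_of_lt hmn)]
    set b₀ : ZMod 2 := if h : 0 < m then (M₀ + J) ⟨m - 1, by omega⟩ else c with hb0
    set A₀ : Prop := ∀ ℓ : Fin n, m ≤ (ℓ : ℕ) → M₀ ℓ = J ℓ with hA0
    rw [Finset.sum_congr rfl (fun b _ => show
        U3 (u km).1 (u km).2.1 (u km).2.2 c' b *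
          (if A₀ ∧ b = b₀ then
            ∏ ℓ ∈ Finset.univ.filter (fun ℓ : Fin n => (ℓ : ℕ) < m),
              U3 (u ℓ).1 (u ℓ).2.1 (u ℓ).2.2 ((M₀ + J) ℓ) (prevBitD n (M₀ + J) c ℓ)
           else 0)
        = if b = b₀ then
            (if A₀ then U3 (u km).1 (u km).2.1 (u km).2.2 c' b₀ *
              ∏ ℓ ∈ Finset.univ.filter (fun ℓ : Fin n => (ℓ : ℕ) < m),
                U3 (u ℓ).1 (u ℓ).2.1 (u ℓ).2.2 ((M₀ + J) ℓ) (prevBitD n (M₀ + J) c ℓ)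
             else 0)
          else 0 from by
        by_cases hb : b = b₀ <;> by_cases hA : A₀ <;> simp [hb, hA])]
    rw [Finset.sum_ite_eq' Finset.univ b₀, if_pos (Finset.mem_univ _)]
    rw [dif_pos (Nat.succ_pos m)]
    have hmk : (⟨m + 1 - 1, by omega⟩ : Fin n) = km := rfl
    rw [hmk]
    have hiff : A₀ ↔ ((∀ ℓ : Fin n, m + 1 ≤ (ℓ : ℕ) → J' ℓ = J ℓ) ∧ c' = (J' + J) km) := by
      constructor
      · intro hA
        constructor
        · intro ℓ hl
          have hne : ℓ ≠ km := by
            intro e; rw [e] at hl; exact Nat.not_succ_le_self m hl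
          rw [← hM0ne ℓ hne]; exact hA ℓ (by omega)
        · have h1 := hA km (le_of_eq rfl)
          rw [hM0k] at h1
          rw [Pi.add_apply, ← h1, ← add_assoc, CharTwo.add_self_eq_zero, zero_add]
      · rintro ⟨hA', hc⟩ ℓ hl
        by_cases he : ℓ = km
        · rw [he, hM0k, hc, Pi.add_apply, ← add_assoc, CharTwo.add_self_eq_zero, zero_add]
        · have : m + 1 ≤ (ℓ : ℕ) := by
            have : (ℓ : ℕ) ≠ m := fun e => he (Fin.ext e)
            omega
          rw [hM0ne ℓ he]; exact hA' ℓ this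
    by_cases hA : A₀
    · rw [if_pos hA, if_pos (hiff.mp hA)]
      obtain ⟨hA', hc⟩ := hiff.mp hA
      have hfil : Finset.univ.filter (fun ℓ : Fin n => (ℓ : ℕ) < m + 1)
          = insert km (Finset.univ.filter (fun ℓ : Fin n => (ℓ : ℕ) < m)) := by
        ext ℓ
        simp only [Finset.mem_filter, Finset.mem_univ, true_and, Finset.mem_insert]
        constructor
        · intro h
          by_cases he : (ℓ : ℕ) = m
          · exact Or.inl (Fin.ext he)
          · exact Or.inr (by omega)
        · rintro (rfl | h)
          · simp [hkm]
          · omega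
      rw [hfil, Finset.prod_insert (by simp [hkm])]
      congr 1
      · have e1 : (J' + J) km = c' := hc.symm
        have e2 : prevBitD n (J' + J) c km = b₀ := by
          rw [prevBitD, hb0]
          by_cases h0 : 0 < m
          · rw [if_pos (show 0 < (km : ℕ) from h0), dif_pos h0]
            rw [Pi.add_apply, Pi.add_apply, hM0ne ⟨m - 1, by omega⟩ (by
              intro e
              have := congrArg Fin.val e
              simp [hkm] at this
              omega)]
          · rw [if_neg (show ¬ 0 < (km : ℕ) from h0), dif_neg h0]
        rw [e1, e2]
      · refine Finset.prod_congr rfl (fun ℓ hl => ?_)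
        simp only [Finset.mem_filter, Finset.mem_univ, true_and] at hl
        have hne : ℓ ≠ km := by
          intro e; rw [e] at hl; exact Nat.lt_irrefl m hl
        have e3 : (M₀ + J) ℓ = (J' + J) ℓ := by
          rw [Pi.add_apply, Pi.add_apply, hM0ne ℓ hne]
        have e4 : prevBitD n (M₀ + J) c ℓ = prevBitD n (J' + J) c ℓ := by
          rw [prevBitD, prevBitD]
          by_cases h0 : 0 < (ℓ : ℕ)
          · rw [if_pos h0, if_pos h0, Pi.add_apply, Pi.add_apply,
              hM0ne ⟨(ℓ : ℕ) - 1, by omega⟩ (by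
                intro e
                have := congrArg Fin.val e
                simp [hkm] at this
                omega)]
          · rw [if_neg h0, if_neg h0]
        rw [e3, e4]
    · rw [if_neg hA, if_neg (fun h => hA (hiff.mpr h))]

lemma walkU_apply (n : ℕ) (u : Fin n → ℝ × ℝ × ℝ) (c' c : ZMod 2)
    (J' J : Fin n → ZMod 2) :
    walkU n u (c', J') (c, J) =
      if c' = (if h : 0 < n then (J' + J) ⟨n - 1, Nat.sub_lt h Nat.one_pos⟩ else c)
      then ∏ ℓ : Fin n,
        U3 (u ℓ).1 (u ℓ).2.1 (u ℓ).2.2 ((J' + J) ℓ) (prevBitD n (J' + J) c ℓ)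
      else 0 := by
  rw [walkU_eq_partP, partP_apply n u n le_rfl]
  congr 1
  · simp only [eq_iff_iff, and_iff_right_iff_imp]
    intro _ ℓ h; exact absurd ℓ.isLt (not_lt.2 h)
  · rw [Finset.filter_true_of_mem (fun ℓ _ => ℓ.isLt)]

lemma sq_apply (n : ℕ) (u : Fin n → ℝ × ℝ × ℝ) (k : ZMod 2)
    (J' J : Fin n → ZMod 2) :
    (walkU n u ^ 2) (k, J') (0, J) =
      ∑ I ∈ Finset.univ.filter (fun I : Fin n → ZMod 2 => lastBit n I = k),
        fTwo n u I (J' + J + I) := by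
  rw [pow_two, Matrix.mul_apply, Fintype.sum_prod_type, Finset.sum_comm,
    Finset.sum_filter]
  refine (Fintype.sum_equiv (Equiv.addLeft J') _ _ fun I => ?_).symm
  refine Eq.symm ?_
  have hEq : (Equiv.addLeft J') I = J' + I := rfl
  rw [hEq]
  have h1 : J' + (J' + I) = I := by rw [← add_assoc, pi_add_self, zero_add]
  have h2 : (J' + I) + J = J' + J + I := add_right_comm J' I J
  simp only [walkU_apply]
  rw [h1, h2]
  rw [show (if h : 0 < n then (J' + J + I) ⟨n - 1, Nat.sub_lt h Nat.one_pos⟩ else (0 : ZMod 2))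
      = lastBit n (J' + J + I) from rfl]
  set c₀ : ZMod 2 := lastBit n (J' + J + I) with hc0
  set P2 : ℂ := ∏ ℓ : Fin n,
      U3 (u ℓ).1 (u ℓ).2.1 (u ℓ).2.2 ((J' + J + I) ℓ) (prevBitD n (J' + J + I) 0 ℓ) with hP2
  rw [Finset.sum_congr rfl (fun c _ => show
      (if k = (if h : 0 < n then I ⟨n - 1, Nat.sub_lt h Nat.one_pos⟩ else c)
       then ∏ ℓ : Fin n, U3 (u ℓ).1 (u ℓ).2.1 (u ℓ).2.2 (I ℓ) (prevBitD n I c ℓ) else 0)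
        * (if c = c₀ then P2 else 0)
      = if c = c₀ then
          ((if k = (if h : 0 < n then I ⟨n - 1, Nat.sub_lt h Nat.one_pos⟩ else c₀)
            then ∏ ℓ : Fin n, U3 (u ℓ).1 (u ℓ).2.1 (u ℓ).2.2 (I ℓ) (prevBitD n I c₀ ℓ)
            else 0) * P2)
        else 0 from by
      by_cases hc : c = c₀ <;> simp [hc])]
  rw [Finset.sum_ite_eq' Finset.univ c₀, if_pos (Finset.mem_univ _)]
  by_cases hk : lastBit n I = k
  · rw [if_pos hk]
    rw [if_pos (show k = (if h : 0 < n then I ⟨n - 1, Nat.sub_lt h Nat.one_pos⟩ else c₀) from ?_)]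
    · rw [fTwo, ← hc0, hP2]
    · by_cases hn : 0 < n
      · rw [dif_pos hn, ← hk, lastBit, dif_pos hn]
      · rw [dif_neg hn, hc0, lastBit, dif_neg hn, ← hk, lastBit, dif_neg hn]
  · rw [if_neg hk]
    rw [if_neg (show ¬ k = (if h : 0 < n then I ⟨n - 1, Nat.sub_lt h Nat.one_pos⟩ else c₀) from ?_),
      zero_mul]
    intro hcon
    apply hk
    by_cases hn : 0 < n
    · rw [dif_pos hn] at hcon; rw [lastBit, dif_pos hn, ← hcon]
    · rw [dif_neg hn] at hcon
      rw [lastBit, dif_neg hn, hcon, hc0, lastBit, dif_neg hn]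

end Stmt12Aux

theorem stmt_12 (n : ℕ) (u : Fin n → ℝ × ℝ × ℝ) (J' J : Fin n → ZMod 2) :
    ∑ k : ZMod 2, ‖(walkU n u ^ 2) (k, J') (0, J)‖ ^ 2 =
      ∑ k : ZMod 2,
        ‖∑ I ∈ Finset.univ.filter (fun I : Fin n → ZMod 2 => lastBit n I = k),
            fTwo n u I (J' + J + I)‖ ^ 2 := by
  exact Finset.sum_congr rfl fun k _ => by rw [Stmt12Aux.sq_apply]
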